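/- Let g ∈ L¹_{loc}(ℝ≥0) be nonnegative with ∫ₜ^{t+1} g(s) ds ≤ Cε for all t ≥ 0, and let y : ℝ≥0 → ℝ≥0 be absolutely continuous satisfying y'(t) + (κ − g(t))·y(t) ≤ M for a.e. t ≥ 0, where κ > 0, M ≥ 0. If Cε < κ/2, then y(t) ≤ e^{Cε}·( y(0)·e^{−(κ−Cε)t} + M·e^{Cε}·∫₀ᵗ e^{−(κ−Cε)(t−s)} ds ), and in particular y(t) ≤ C'·(y(0)·e^{−κt/2} + M) for a constant C' depending only on Cε and κ. -/

import Mathlib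

open MeasureTheory intervalIntegral Set

lemma gr_intInt (g : ℝ → ℝ) (hgint : ∀ t ≥ (0:ℝ), IntervalIntegrable g volume t (t+1)) :
    ∀ a b : ℝ, 0 ≤ a → a ≤ b → IntervalIntegrable g volume a b := by
  have H : ∀ n : ℕ, ∀ a : ℝ, 0 ≤ a → IntervalIntegrable g volume a (a + n) := by
    intro n
    induction n with
    | zero => intro a ha; simpa using ((hgint a ha).mono_set (by
        rw [Set.uIcc_of_le (le_refl a), Set.uIcc_of_le (by linarith : a ≤ a + 1)]
        exact Set.Icc_subset_Icc le_rfl (by linarith)))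
    | succ n ih =>
      intro a ha
      have h1 := ih a ha
      have h2 := hgint (a + n) (by positivity)
      have h3 := h1.trans h2
      have : a + ((n:ℝ)+1) = a + (n:ℝ) + 1 := by ring
      rw [Nat.cast_add, Nat.cast_one, this]
      exact h3
  intro a b ha hab
  have hb : b ≤ a + (⌈b - a⌉₊ : ℝ) := by
    have := Nat.le_ceil (b - a); linarith
  exact (H ⌈b - a⌉₊ a ha).mono_set (by
    rw [Set.uIcc_of_le hab, Set.uIcc_of_le (by linarith : a ≤ a + (⌈b - a⌉₊:ℝ))]
    exact Set.Icc_subset_Icc le_rfl hb)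

lemma gr_int_nonneg (g : ℝ → ℝ) (hg : ∀ t ≥ (0:ℝ), 0 ≤ g t)
    {a b : ℝ} (ha : 0 ≤ a) (hab : a ≤ b) :
    0 ≤ ∫ s in a..b, g s := by
  apply intervalIntegral.integral_nonneg hab
  intro u hu; exact hg u (le_trans ha hu.1)

lemma gr_int_add (g : ℝ → ℝ) (hgint : ∀ t ≥ (0:ℝ), IntervalIntegrable g volume t (t+1))
    {a b c : ℝ} (ha : 0 ≤ a) (hab : a ≤ b) (hbc : b ≤ c) :
    (∫ s in a..b, g s) + ∫ s in b..c, g s = ∫ s in a..c, g s :=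
  intervalIntegral.integral_add_adjacent_intervals
    (gr_intInt g hgint a b ha hab) (gr_intInt g hgint b c (le_trans ha hab) hbc)

lemma gr_int_mono (g : ℝ → ℝ) (hg : ∀ t ≥ (0:ℝ), 0 ≤ g t)
    (hgint : ∀ t ≥ (0:ℝ), IntervalIntegrable g volume t (t+1))
    {a b c : ℝ} (ha : 0 ≤ a) (hab : a ≤ b) (hbc : b ≤ c) :
    (∫ s in a..b, g s) ≤ ∫ s in a..c, g s := by
  rw [← gr_int_add g hgint ha hab hbc]
  have := gr_int_nonneg g hg (le_trans ha hab) hbc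
  linarith

lemma gr_int_unit (g : ℝ → ℝ) (hg : ∀ t ≥ (0:ℝ), 0 ≤ g t)
    (hgint : ∀ t ≥ (0:ℝ), IntervalIntegrable g volume t (t+1))
    {Cε : ℝ} (hgbound : ∀ t ≥ (0:ℝ), (∫ s in t..(t+1), g s) ≤ Cε)
    {a b : ℝ} (ha : 0 ≤ a) (hab : a ≤ b) (hb1 : b ≤ a + 1) :
    (∫ s in a..b, g s) ≤ Cε :=
  le_trans (gr_int_mono g hg hgint ha hab hb1) (hgbound a ha)

lemma gr_int_lin (g : ℝ → ℝ) (hg : ∀ t ≥ (0:ℝ), 0 ≤ g t)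
    (hgint : ∀ t ≥ (0:ℝ), IntervalIntegrable g volume t (t+1))
    {Cε : ℝ} (hCε : 0 ≤ Cε) (hgbound : ∀ t ≥ (0:ℝ), (∫ s in t..(t+1), g s) ≤ Cε)
    {a b : ℝ} (ha : 0 ≤ a) (hab : a ≤ b) :
    (∫ s in a..b, g s) ≤ Cε * (b - a) + Cε := by
  have H : ∀ n : ℕ, ∀ a : ℝ, 0 ≤ a → ∀ b : ℝ, a ≤ b → b ≤ a + n + 1 →
      (∫ s in a..b, g s) ≤ Cε * (n + 1) := by
    intro n
    induction n with
    | zero =>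
      intro a ha b hab hb1
      simpa using gr_int_unit g hg hgint hgbound ha hab (by push_cast at hb1; linarith)
    | succ n ih =>
      intro a ha b hab hb1
      by_cases hb : b ≤ a + 1
      · have := gr_int_unit g hg hgint hgbound ha hab hb
        nlinarith [hCε]
      · push_neg at hb
        have h1 : (∫ s in a..(a+1), g s) ≤ Cε := hgbound a ha
        have h2 : (∫ s in (a+1)..b, g s) ≤ Cε * (n + 1) := by
          apply ih (a+1) (by linarith) b (by linarith)
          push_cast at hb1 ⊢; linarith
        rw [← gr_int_add g hgint (a:=a) (b:=a+1) (c:=b) ha (by linarith) (by linarith)]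
        push_cast; linarith
  have h1 : b ≤ a + (⌊b - a⌋₊ : ℝ) + 1 := by
    have := Nat.lt_floor_add_one (b - a); linarith
  have h2 : (⌊b - a⌋₊ : ℝ) ≤ b - a := Nat.floor_le (by linarith)
  have := H ⌊b - a⌋₊ a ha b hab h1
  nlinarith
section
variable (g : ℝ → ℝ)

lemma gr_Gcont (hgInt : ∀ a b : ℝ, 0 ≤ a → a ≤ b → IntervalIntegrable g volume a b)
    {a b : ℝ} (ha : 0 ≤ a) (hab : a ≤ b) :
    ContinuousOn (fun s => ∫ r in a..s, g r) (Icc a b) := by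
  have h1 : IntegrableOn g (uIcc a b) volume := by
    rw [uIcc_of_le hab]
    rw [integrableOn_Icc_iff_integrableOn_Ioc]
    exact (intervalIntegrable_iff_integrableOn_Ioc_of_le hab).1 (hgInt a b ha hab)
  have := intervalIntegral.continuousOn_primitive_interval (a := a) (b := b) (f := g)
    (μ := volume) h1
  rwa [uIcc_of_le hab] at this
end

lemma gr_key (g : ℝ → ℝ) (hg : ∀ t ≥ (0:ℝ), 0 ≤ g t)
    (hgint : ∀ t ≥ (0:ℝ), IntervalIntegrable g volume t (t+1))
    {a b : ℝ} (ha : 0 ≤ a) (hab : a ≤ b) :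
    (∫ s in a..b, g s * Real.exp (∫ r in a..s, g r))
      ≤ Real.exp (∫ r in a..b, g r) - 1 := by
  have hgInt := gr_intInt g hgint
  set G : ℝ → ℝ := fun s => ∫ r in a..s, g r with hGdef
  have Ga : G a = 0 := intervalIntegral.integral_same
  have Gadd : ∀ p q : ℝ, a ≤ p → p ≤ q → G p + ∫ r in p..q, g r = G q := by
    intro p q hp hpq
    exact gr_int_add g hgint ha hp hpq
  have Gmono : ∀ p q : ℝ, a ≤ p → p ≤ q → G p ≤ G q := by
    intro p q hp hpq
    have h := gr_int_nonneg g hg (le_trans ha hp) hpq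
    have := Gadd p q hp hpq
    simp only [hGdef] at this ⊢; linarith
  have Gcont : ContinuousOn G (Icc a b) := gr_Gcont g hgInt ha hab
  have hIone : ∀ p q : ℝ, a ≤ p → p ≤ q → q ≤ b →
      IntervalIntegrable (fun s => g s * Real.exp (G s)) volume p q := by
    intro p q hp hpq hq
    apply (hgInt p q (le_trans ha hp) hpq).mul_continuousOn
    apply (Real.continuous_exp.comp_continuousOn (Gcont.mono ?_))
    rw [uIcc_of_le hpq]; exact Icc_subset_Icc hp hq
  rcases eq_or_lt_of_le hab with rfl | hlt
  · simp [Ga]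
  apply le_of_forall_pos_le_add
  intro ε hε
  set K : ℝ := Real.exp (G b) - 1 with hK
  have hK0 : 0 ≤ K := by
    have : (0:ℝ) ≤ G b := Ga ▸ Gmono a b le_rfl hab
    have := Real.one_le_exp this
    simp only [hK]; linarith
  set ε' : ℝ := ε / (K + 1) with hε'
  have hε'0 : 0 < ε' := by positivity
  -- uniform continuity of G
  have hUC := (isCompact_Icc : IsCompact (Icc a b)).uniformContinuousOn_of_continuous Gcont
  rw [Metric.uniformContinuousOn_iff] at hUC
  obtain ⟨δ, hδ0, hδ⟩ := hUC ε' hε'0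
  -- choose N
  obtain ⟨N, hN⟩ := exists_nat_gt ((b - a) / δ)
  have hN0 : 0 < (N:ℝ) := lt_of_le_of_lt (div_nonneg (by linarith) hδ0.le) hN
  have hNn : N ≠ 0 := by exact_mod_cast hN0.ne'
  set h : ℝ := (b - a) / N with hh
  have hh0 : 0 < h := by
    apply div_pos (by linarith) hN0
  have hhδ : h < δ := by
    rw [hh, div_lt_iff₀ hN0]
    calc b - a = ((b-a)/δ) * δ := by field_simp
    _ < N * δ := mul_lt_mul_of_pos_right hN hδ0
    _ = δ * N := mul_comm _ _
  set p : ℕ → ℝ := fun i => a + i * h with hp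
  have hp0 : p 0 = a := by simp [hp]
  have hpN : p N = b := by
    simp only [hp, hh]; field_simp; ring
  have hpmono : ∀ i j : ℕ, i ≤ j → p i ≤ p j := by
    intro i j hij
    simp only [hp]
    have : (i:ℝ) ≤ j := by exact_mod_cast hij
    nlinarith
  have hpmem : ∀ i : ℕ, i ≤ N → p i ∈ Icc a b := by
    intro i hi
    constructor
    · rw [← hp0]; exact hpmono 0 i (Nat.zero_le _)
    · rw [← hpN]; exact hpmono i N hi
  have hpa : ∀ i : ℕ, a ≤ p i := fun i => hp0 ▸ hpmono 0 i (Nat.zero_le _)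
  -- split integral
  have hsplit : (∫ s in a..b, g s * Real.exp (G s))
      = ∑ i ∈ Finset.range N, ∫ s in p i..p (i+1), g s * Real.exp (G s) := by
    rw [intervalIntegral.sum_integral_adjacent_intervals (fun k hk => ?_)]
    · rw [hp0, hpN]
    · exact hIone (p k) (p (k+1)) (hpa k) (hpmono k (k+1) (by omega))
        (hpN ▸ hpmono (k+1) N (by omega))
  -- per piece
  have hpiece : ∀ i : ℕ, i < N →
      (∫ s in p i..p (i+1), g s * Real.exp (G s))
        ≤ (Real.exp (G (p (i+1))) - Real.exp (G (p i))) * (1 + ε') := by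
    intro i hi
    have hi1 : (i:ℕ)+1 ≤ N := hi
    have hmem := hpmem i (le_of_lt hi)
    have hmem1 := hpmem (i+1) hi1
    have hple : p i ≤ p (i+1) := hpmono i (i+1) (by omega)
    have step1 : (∫ s in p i..p (i+1), g s * Real.exp (G s))
        ≤ ∫ s in p i..p (i+1), g s * Real.exp (G (p (i+1))) := by
      apply intervalIntegral.integral_mono_on hple
        (hIone _ _ (hpa i) hple hmem1.2)
        ((hgInt _ _ (le_trans ha (hpa i)) hple).mul_continuousOn continuousOn_const)
      intro x hx
      have hxa : a ≤ x := le_trans (hpa i) hx.1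
      have hgx : 0 ≤ g x := hg x (le_trans ha hxa)
      have : G x ≤ G (p (i+1)) := Gmono x (p (i+1)) hxa hx.2
      exact mul_le_mul_of_nonneg_left (Real.exp_le_exp.2 this) hgx
    have step2 : (∫ s in p i..p (i+1), g s * Real.exp (G (p (i+1))))
        = Real.exp (G (p (i+1))) * (G (p (i+1)) - G (p i)) := by
      rw [intervalIntegral.integral_mul_const]
      have := Gadd (p i) (p (i+1)) (hpa i) hple
      rw [show (∫ s in p i..p (i+1), g s) = G (p (i+1)) - G (p i) by linarith]
      ring
    -- convexity bounds
    set x := G (p (i+1)) with hx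
    set yy := G (p i) with hy
    have hxy : yy ≤ x := Gmono _ _ (hpa i) hple
    have hdiff : x - yy ≤ ε' := by
      have hd := hδ (p (i+1)) hmem1 (p i) hmem (by
        rw [Real.dist_eq]
        have : p (i+1) - p i = h := by simp only [hp]; push_cast; ring
        rw [show p (i+1) - p i = h from this] at *
        rw [this, abs_of_pos hh0]; exact hhδ)
      rw [Real.dist_eq] at hd
      have := le_abs_self (x - yy)
      linarith
    have cvx1 : Real.exp yy * (x - yy) ≤ Real.exp x - Real.exp yy := by
      have h1 : x - yy + 1 ≤ Real.exp (x - yy) := Real.add_one_le_exp _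
      have h2 : Real.exp yy * (x - yy + 1) ≤ Real.exp yy * Real.exp (x - yy) :=
        mul_le_mul_of_nonneg_left h1 (Real.exp_nonneg _)
      rw [← Real.exp_add] at h2
      have : yy + (x - yy) = x := by ring
      rw [this] at h2
      nlinarith [Real.exp_nonneg yy]
    have hex0 : 0 ≤ Real.exp x - Real.exp yy := by
      have := Real.exp_le_exp.2 hxy; linarith
    have cvx2 : Real.exp x * (x - yy) ≤ (Real.exp x - Real.exp yy) * (1 + ε') := by
      have : Real.exp x * (x - yy)
          = Real.exp yy * (x - yy) + (Real.exp x - Real.exp yy) * (x - yy) := by ring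
      rw [this]
      have h3 : (Real.exp x - Real.exp yy) * (x - yy) ≤ (Real.exp x - Real.exp yy) * ε' :=
        mul_le_mul_of_nonneg_left hdiff hex0
      nlinarith
    calc (∫ s in p i..p (i+1), g s * Real.exp (G s))
        ≤ Real.exp x * (x - yy) := by rw [← step2] at *; exact le_trans step1 (le_of_eq step2)
      _ ≤ (Real.exp x - Real.exp yy) * (1 + ε') := cvx2
  -- sum up
  have hsum : (∫ s in a..b, g s * Real.exp (G s)) ≤ K * (1 + ε') := by
    rw [hsplit]
    calc ∑ i ∈ Finset.range N, ∫ s in p i..p (i+1), g s * Real.exp (G s)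
        ≤ ∑ i ∈ Finset.range N, (Real.exp (G (p (i+1))) - Real.exp (G (p i))) * (1 + ε') :=
          Finset.sum_le_sum (fun i hi => hpiece i (Finset.mem_range.1 hi))
      _ = (∑ i ∈ Finset.range N, (Real.exp (G (p (i+1))) - Real.exp (G (p i)))) * (1 + ε') := by
          rw [Finset.sum_mul]
      _ = (Real.exp (G (p N)) - Real.exp (G (p 0))) * (1 + ε') := by
          rw [Finset.sum_range_sub (fun i => Real.exp (G (p i)))]
      _ = K * (1 + ε') := by rw [hp0, hpN, Ga, Real.exp_zero, hK]
  have hfin : K * (1 + ε') ≤ K + ε := by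
    have hKe : K * ε' ≤ ε := by
      rw [hε', mul_div_assoc']
      rw [div_le_iff₀ (by linarith : (0:ℝ) < K + 1)]
      nlinarith
    nlinarith
  exact le_trans hsum hfin

lemma gr_gronwall (g u c : ℝ → ℝ) (hg : ∀ t ≥ (0:ℝ), 0 ≤ g t)
    (hgint : ∀ t ≥ (0:ℝ), IntervalIntegrable g volume t (t+1))
    {a b : ℝ} (ha : 0 ≤ a) (hab : a ≤ b)
    (hu_cont : ∀ t ≥ (0:ℝ), ContinuousAt u t)
    (hc_cont : ContinuousOn c (Icc a b))
    (hc_mono : MonotoneOn c (Icc a b))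
    (hc_nonneg : ∀ r ∈ Icc a b, 0 ≤ c r)
    (huc : ∀ r ∈ Icc a b, u r ≤ c r + ∫ s in a..r, g s * u s) :
    u b ≤ c b * Real.exp (∫ s in a..b, g s) := by
  have hgInt := gr_intInt g hgint
  set G : ℝ → ℝ := fun s => ∫ r in a..s, g r with hGdef
  have Ga : G a = 0 := intervalIntegral.integral_same
  have Gmono : ∀ p q : ℝ, a ≤ p → p ≤ q → G p ≤ G q := by
    intro p q hp hpq
    have h := gr_int_nonneg g hg (le_trans ha hp) hpq
    have := gr_int_add g hgint ha hp hpq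
    simp only [hGdef]; linarith
  have Gcont : ContinuousOn G (Icc a b) := gr_Gcont g hgInt ha hab
  have hucont : ContinuousOn u (Icc a b) := fun t ht =>
    (hu_cont t (le_trans ha ht.1)).continuousWithinAt
  -- main step with parameters
  have main : ∀ η > (0:ℝ), ∀ δ > (0:ℝ),
      u b ≤ (1+δ) * (c b + η) * Real.exp (G b) := by
    intro η hη δ hδ
    set D : ℝ := 1 + δ with hD
    have hD1 : 1 ≤ D := by linarith
    set B : ℝ → ℝ := fun t => D * (c t + η) * Real.exp (G t) with hB
    have Bcont : ContinuousOn B (Icc a b) := by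
      apply ContinuousOn.mul
      · exact (continuousOn_const.mul (hc_cont.add continuousOn_const))
      · exact Real.continuous_exp.comp_continuousOn Gcont
    set S : Set ℝ := {t | t ∈ Icc a b ∧ ∀ r ∈ Icc a t, u r ≤ B r} with hS
    have hmemS : a ∈ S := by
      refine ⟨⟨le_rfl, hab⟩, ?_⟩
      intro r hr
      have hra : r = a := le_antisymm hr.2 hr.1
      subst hra
      have h1 := huc r ⟨le_rfl, hab⟩
      rw [intervalIntegral.integral_same] at h1
      have h2 : 0 ≤ c r := hc_nonneg r ⟨le_rfl, hab⟩
      have h3 : (1:ℝ) ≤ Real.exp (G r) := by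
        rw [show G r = 0 from Ga]; simp
      have : c r ≤ D * (c r + η) * 1 := by nlinarith
      calc u r ≤ c r + 0 := by linarith
        _ = c r := by ring
        _ ≤ D * (c r + η) * 1 := this
        _ ≤ B r := by rw [hB]; simp only []; nlinarith
    have hbdd : BddAbove S := ⟨b, fun z hz => hz.1.2⟩
    set T : ℝ := sSup S with hT
    have haT : a ≤ T := le_csSup hbdd hmemS
    have hTb : T ≤ b := csSup_le ⟨a, hmemS⟩ (fun z hz => hz.1.2)
    have hTmem : T ∈ Icc a b := ⟨haT, hTb⟩
    -- u ≤ B on [a, T]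
    have PT : ∀ r ∈ Icc a T, u r ≤ B r := by
      intro r hr
      rcases lt_or_eq_of_le hr.2 with hrT | hrT
      · obtain ⟨t, htS, hrt⟩ := exists_lt_of_lt_csSup ⟨a, hmemS⟩ hrT
        exact htS.2 r ⟨hr.1, hrt.le⟩
      · have hrb : r ≤ b := le_trans hr.2 hTb
        rcases eq_or_lt_of_le hr.1 with hra | hra
        · exact hmemS.2 r ⟨hr.1, hra.ge⟩
        · -- limit from the left
          have hIco : ∀ s ∈ Ico a r, u s ≤ B s := by
            intro s hs
            obtain ⟨t, htS, hst⟩ := exists_lt_of_lt_csSup ⟨a, hmemS⟩ (hrT ▸ hs.2)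
            exact htS.2 s ⟨hs.1, hst.le⟩
          have hne : (nhdsWithin r (Ico a r)).NeBot := by
            rw [← mem_closure_iff_nhdsWithin_neBot, closure_Ico hra.ne]
            exact ⟨hra.le, le_rfl⟩
          have h1 : Filter.Tendsto u (nhdsWithin r (Ico a r)) (nhds (u r)) :=
            (hu_cont r (le_trans ha hr.1)).continuousWithinAt
          have h2 : Filter.Tendsto B (nhdsWithin r (Ico a r)) (nhds (B r)) :=
            (Bcont r ⟨hr.1, hrb⟩).mono
              (fun x (hx : x ∈ Ico a r) => ⟨hx.1, le_trans hx.2.le hrb⟩)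
          exact le_of_tendsto_of_tendsto h1 h2
            (Filter.eventually_inf_principal.2 (Filter.Eventually.of_forall hIco))
    have strict : ∀ r ∈ Icc a T, u r < B r := by
      intro r hr
      have hrb : r ≤ b := le_trans hr.2 hTb
      have hrIcc : r ∈ Icc a b := ⟨hr.1, hrb⟩
      have h1 := huc r hrIcc
      have hexpc : ContinuousOn (fun s => Real.exp (G s)) (Icc a r) :=
        (Real.continuous_exp.comp_continuousOn (Gcont.mono (Icc_subset_Icc le_rfl hrb)))
      have hint_gu : IntervalIntegrable (fun s => g s * u s) volume a r := by
        apply (hgInt a r ha hr.1).mul_continuousOn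
        rw [uIcc_of_le hr.1]
        exact hucont.mono (Icc_subset_Icc le_rfl hrb)
      have hint_gB : IntervalIntegrable (fun s => g s * B s) volume a r := by
        apply (hgInt a r ha hr.1).mul_continuousOn
        rw [uIcc_of_le hr.1]
        exact Bcont.mono (Icc_subset_Icc le_rfl hrb)
      have hint_gE : IntervalIntegrable
          (fun s => g s * (D * (c r + η) * Real.exp (G s))) volume a r := by
        apply (hgInt a r ha hr.1).mul_continuousOn
        rw [uIcc_of_le hr.1]
        exact continuousOn_const.mul hexpc
      have h2 : (∫ s in a..r, g s * u s) ≤ ∫ s in a..r, g s * B s := by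
        apply intervalIntegral.integral_mono_on hr.1 hint_gu hint_gB
        intro x hx
        have hgx : 0 ≤ g x := hg x (le_trans ha hx.1)
        exact mul_le_mul_of_nonneg_left (PT x ⟨hx.1, le_trans hx.2 hr.2⟩) hgx
      have h3 : (∫ s in a..r, g s * B s)
          ≤ ∫ s in a..r, g s * (D * (c r + η) * Real.exp (G s)) := by
        apply intervalIntegral.integral_mono_on hr.1 hint_gB hint_gE
        intro x hx
        have hgx : 0 ≤ g x := hg x (le_trans ha hx.1)
        have hcx : c x ≤ c r := hc_mono ⟨hx.1, le_trans hx.2 hrb⟩ hrIcc hx.2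
        have : B x ≤ D * (c r + η) * Real.exp (G x) := by
          show D * (c x + η) * Real.exp (G x) ≤ D * (c r + η) * Real.exp (G x)
          have hE := Real.exp_nonneg (G x)
          have hD0 : (0:ℝ) ≤ D := by linarith
          exact mul_le_mul_of_nonneg_right
            (mul_le_mul_of_nonneg_left (by linarith) hD0) hE
        exact mul_le_mul_of_nonneg_left this hgx
      have h4 : (∫ s in a..r, g s * (D * (c r + η) * Real.exp (G s)))
          = D * (c r + η) * ∫ s in a..r, g s * Real.exp (G s) := by
        rw [← intervalIntegral.integral_const_mul]
        apply intervalIntegral.integral_congr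
        intro x _; ring
      have h5 : (∫ s in a..r, g s * Real.exp (G s)) ≤ Real.exp (G r) - 1 :=
        gr_key g hg hgint ha hr.1
      have hDc : 0 ≤ D * (c r + η) := by
        have := hc_nonneg r hrIcc; nlinarith
      have h6 : D * (c r + η) * (∫ s in a..r, g s * Real.exp (G s))
          ≤ D * (c r + η) * (Real.exp (G r) - 1) :=
        mul_le_mul_of_nonneg_left h5 hDc
      have hcr : 0 ≤ c r := hc_nonneg r hrIcc
      have hBr : B r = D * (c r + η) * Real.exp (G r) := rfl
      nlinarith
    have hTeq : T = b := by
      by_contra hne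
      have hTlt : T < b := lt_of_le_of_ne hTb hne
      have hpos : 0 < B T - u T := by
        have := strict T ⟨haT, le_rfl⟩; linarith
      have hev : ∀ᶠ t in nhdsWithin T (Icc a b), 0 < B t - u t :=
        ((Bcont.sub hucont) T hTmem).eventually (eventually_gt_nhds hpos)
      rw [Filter.eventually_iff, mem_nhdsWithin] at hev
      obtain ⟨U, hUopen, hTU, hUsub⟩ := hev
      obtain ⟨ι, hι0, hball⟩ := Metric.isOpen_iff.1 hUopen T hTU
      set t' : ℝ := min b (T + ι/2) with ht'
      have ht'T : T < t' := lt_min hTlt (by linarith)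
      have ht'S : t' ∈ S := by
        refine ⟨⟨le_trans haT ht'T.le, min_le_left _ _⟩, ?_⟩
        intro r hr
        rcases le_or_gt r T with hcase | hcase
        · exact PT r ⟨hr.1, hcase⟩
        · have hrU : r ∈ U := by
            apply hball
            rw [Metric.mem_ball, Real.dist_eq, abs_of_pos (by linarith : 0 < r - T)]
            have : r ≤ T + ι/2 := le_trans hr.2 (min_le_right _ _)
            linarith
          have : 0 < B r - u r := hUsub ⟨hrU, ⟨hr.1, le_trans hr.2 (min_le_left _ _)⟩⟩
          linarith
      have : t' ≤ T := le_csSup hbdd ht'S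
      linarith
    have hfin := PT b (by rw [hTeq]; exact ⟨hab, le_rfl⟩)
    exact hfin
  -- pass to the limit η, δ → 0
  have htend : Filter.Tendsto (fun e : ℝ => (1+e) * (c b + e) * Real.exp (G b))
      (nhdsWithin 0 (Ioi 0)) (nhds ((1+0) * (c b + 0) * Real.exp (G b))) := by
    apply Filter.Tendsto.mono_left _ nhdsWithin_le_nhds
    exact (((continuous_const.add continuous_id).mul
      (continuous_const.add continuous_id)).mul continuous_const).tendsto 0
  have hev : ∀ᶠ e in nhdsWithin (0:ℝ) (Ioi 0),
      u b ≤ (1+e) * (c b + e) * Real.exp (G b) := by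
    filter_upwards [self_mem_nhdsWithin] with e he
    exact main e he e he
  have := ge_of_tendsto htend hev
  simpa using this

lemma gr_ftc (κ M : ℝ) (g y y' : ℝ → ℝ)
    (hgint : ∀ t ≥ (0:ℝ), IntervalIntegrable g volume t (t+1))
    (hy : ∀ t ≥ (0:ℝ), HasDerivAt y (y' t) t)
    (hineq : ∀ᵐ t ∂(volume.restrict (Set.Ici (0:ℝ))), y' t + (κ - g t) * y t ≤ M)
    {a b : ℝ} (ha : 0 ≤ a) (hab : a ≤ b) :
    y b * Real.exp (κ*b) - y a * Real.exp (κ*a)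
      ≤ ∫ s in a..b, (M * Real.exp (κ*s) + g s * (y s * Real.exp (κ*s))) := by
  set u : ℝ → ℝ := fun t => y t * Real.exp (κ*t) with hu
  set v : ℝ → ℝ := fun t => (y' t + κ * y t) * Real.exp (κ*t) with hv
  set h : ℝ → ℝ := fun s => M * Real.exp (κ*s) + g s * (y s * Real.exp (κ*s)) with hh
  have hderivAt : ∀ x : ℝ, 0 ≤ x → HasDerivAt u (v x) x := by
    intro x hx
    have h1 := hy x hx
    have h2 : HasDerivAt (fun t : ℝ => Real.exp (κ*t)) (Real.exp (κ*x) * κ) x := by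
      have : HasDerivAt (fun t : ℝ => κ * t) κ x := by
        simpa using (hasDerivAt_id x).const_mul κ
      exact this.exp
    have := h1.mul h2
    refine this.congr_deriv ?_
    simp only [hv]; ring
  have hcont : ContinuousOn u (Icc a b) := by
    intro t ht
    exact ((hderivAt t (le_trans ha ht.1)).continuousAt).continuousWithinAt
  have hderiv : ∀ x ∈ Ioo a b, HasDerivWithinAt u (v x) (Ioi x) x := by
    intro x hx
    exact (hderivAt x (le_trans ha hx.1.le)).hasDerivWithinAt
  -- integrability of h on [a,b]
  have hyexp : ContinuousOn (fun s => y s * Real.exp (κ*s)) (uIcc a b) := by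
    rw [uIcc_of_le hab]
    exact hcont
  have hint1 : IntervalIntegrable h volume a b := by
    apply IntervalIntegrable.add
    · exact (Continuous.intervalIntegrable (by continuity) a b)
    · exact (gr_intInt g hgint a b ha hab).mul_continuousOn hyexp
  have h_int : IntegrableOn h (Icc a b) volume := by
    rw [integrableOn_Icc_iff_integrableOn_Ioc]
    exact (intervalIntegrable_iff_integrableOn_Ioc_of_le hab).1 hint1
  -- φ := max v h
  set φ : ℝ → ℝ := fun s => max (v s) (h s) with hφ
  have hvh : ∀ᵐ t ∂(volume.restrict (Set.Ici (0:ℝ))), φ t = h t := by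
    filter_upwards [hineq] with t ht
    have he : (0:ℝ) < Real.exp (κ*t) := Real.exp_pos _
    have : v t ≤ h t := by
      simp only [hv, hh]
      have : (y' t + κ * y t) ≤ M + g t * y t := by nlinarith
      nlinarith
    exact max_eq_right this
  have hvh2 : ∀ᵐ t ∂(volume.restrict (Icc a b)), φ t = h t := by
    have hle : volume.restrict (Icc a b) ≤ volume.restrict (Set.Ici (0:ℝ)) := by
      apply Measure.restrict_mono (Icc_subset_Ici_self.trans (Ici_subset_Ici.2 ha)) le_rfl
    exact hvh.filter_mono (ae_mono hle)
  have φint : IntegrableOn φ (Icc a b) volume := h_int.congr (Filter.EventuallyEq.symm hvh2)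
  have hmain := intervalIntegral.sub_le_integral_of_hasDeriv_right_of_le hab hcont hderiv φint
    (fun x _ => le_max_left _ _)
  have heq : (∫ s in a..b, φ s) = ∫ s in a..b, h s := by
    apply intervalIntegral.integral_congr_ae
    have h1 := (ae_restrict_iff' measurableSet_Icc).1 hvh2
    filter_upwards [h1] with x hx hmem
    apply hx
    rw [uIoc_of_le hab] at hmem
    exact ⟨hmem.1.le, hmem.2⟩
  calc y b * Real.exp (κ*b) - y a * Real.exp (κ*a) = u b - u a := rfl
    _ ≤ ∫ s in a..b, φ s := hmain
    _ = ∫ s in a..b, h s := heq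

lemma gr_A (κ M : ℝ) (hM : 0 ≤ M) (g y y' : ℝ → ℝ)
    (hg : ∀ t ≥ (0:ℝ), 0 ≤ g t)
    (hgint : ∀ t ≥ (0:ℝ), IntervalIntegrable g volume t (t+1))
    (hy : ∀ t ≥ (0:ℝ), HasDerivAt y (y' t) t)
    (hypos : ∀ t ≥ (0:ℝ), 0 ≤ y t)
    (hineq : ∀ᵐ t ∂(volume.restrict (Set.Ici (0:ℝ))), y' t + (κ - g t) * y t ≤ M)
    {a b : ℝ} (ha : 0 ≤ a) (hab : a ≤ b) :
    y b * Real.exp (κ*b) ≤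
      (y a * Real.exp (κ*a) + ∫ s in a..b, M * Real.exp (κ*s))
        * Real.exp (∫ s in a..b, g s) := by
  set u : ℝ → ℝ := fun t => y t * Real.exp (κ*t) with hu
  have hMe : Continuous (fun s : ℝ => M * Real.exp (κ*s)) := by continuity
  set c : ℝ → ℝ := fun r => u a + ∫ s in a..r, M * Real.exp (κ*s) with hc
  have hcc : Continuous c := by
    apply continuous_const.add
    exact intervalIntegral.continuous_primitive (fun p q => hMe.intervalIntegrable p q) a
  have hcadd : ∀ p q : ℝ, (∫ s in a..p, M * Real.exp (κ*s)) + ∫ s in p..q, M * Real.exp (κ*s)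
      = ∫ s in a..q, M * Real.exp (κ*s) :=
    fun p q => intervalIntegral.integral_add_adjacent_intervals
      (hMe.intervalIntegrable a p) (hMe.intervalIntegrable p q)
  have hMint_nonneg : ∀ p q : ℝ, p ≤ q → 0 ≤ ∫ s in p..q, M * Real.exp (κ*s) := by
    intro p q hpq
    apply intervalIntegral.integral_nonneg hpq
    intro s _; positivity
  have hu_cont : ∀ t ≥ (0:ℝ), ContinuousAt u t := by
    intro t ht
    exact ((hy t ht).continuousAt).mul
      ((Real.continuous_exp.comp (continuous_const.mul continuous_id)).continuousAt)
  have hres := gr_gronwall g u c hg hgint ha hab hu_cont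
    (hcc.continuousOn) ?_ ?_ ?_
  · have hcb : c b = y a * Real.exp (κ*a) + ∫ s in a..b, M * Real.exp (κ*s) := rfl
    rw [hcb] at hres
    exact hres
  · -- monotone
    intro p hp q hq hpq
    have := hMint_nonneg p q hpq
    have := hcadd a p
    simp only [hc]
    have h2 := hcadd p q
    linarith [hcadd p q]
  · -- nonneg
    intro r hr
    have h1 : 0 ≤ u a := mul_nonneg (hypos a ha) (Real.exp_nonneg _)
    have := hMint_nonneg a r hr.1
    simp only [hc]; linarith
  · -- integral inequality
    intro r hr
    have h0r : 0 ≤ r := le_trans ha hr.1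
    have hftc := gr_ftc κ M g y y' hgint hy hineq ha hr.1
    have hsplit : (∫ s in a..r, (M * Real.exp (κ*s) + g s * (y s * Real.exp (κ*s))))
        = (∫ s in a..r, M * Real.exp (κ*s)) + ∫ s in a..r, g s * u s := by
      apply intervalIntegral.integral_add (hMe.intervalIntegrable a r)
      apply (gr_intInt g hgint a r ha hr.1).mul_continuousOn
      rw [uIcc_of_le hr.1]
      intro t ht
      exact (hu_cont t (le_trans ha ht.1)).continuousWithinAt
    simp only [hc]
    have : u r - u a ≤ (∫ s in a..r, M * Real.exp (κ*s)) + ∫ s in a..r, g s * u s := by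
      rw [← hsplit]; exact hftc
    linarith

lemma gr_T (κ M Cε : ℝ) (hM : 0 ≤ M) (g y y' : ℝ → ℝ)
    (hg : ∀ t ≥ (0:ℝ), 0 ≤ g t)
    (hgint : ∀ t ≥ (0:ℝ), IntervalIntegrable g volume t (t+1))
    (hgbound : ∀ t ≥ (0:ℝ), (∫ s in t..(t+1), g s) ≤ Cε)
    (hy : ∀ t ≥ (0:ℝ), HasDerivAt y (y' t) t)
    (hypos : ∀ t ≥ (0:ℝ), 0 ≤ y t)
    (hineq : ∀ᵐ t ∂(volume.restrict (Set.Ici (0:ℝ))), y' t + (κ - g t) * y t ≤ M) :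
    ∀ t ≥ (0:ℝ), y t * Real.exp (κ*t)
      ≤ y 0 * Real.exp (∫ s in (0:ℝ)..t, g s)
        + ∫ s in (0:ℝ)..t, M * Real.exp (κ*s)
            * Real.exp ((∫ r in (0:ℝ)..t, g r) - (∫ r in (0:ℝ)..s, g r) + Cε) := by
  have hgInt := gr_intInt g hgint
  set F : ℝ → ℝ := fun s => ∫ r in (0:ℝ)..s, g r with hF
  have hFcont : ∀ T : ℝ, 0 ≤ T → ContinuousOn F (Icc 0 T) := by
    intro T hT
    exact gr_Gcont g hgInt le_rfl hT
  have hIcont : ∀ T : ℝ, 0 ≤ T →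
      ContinuousOn (fun s => M * Real.exp (κ*s) * Real.exp (F T - F s + Cε)) (Icc 0 T) := by
    intro T hT
    apply ContinuousOn.mul
    · exact (continuous_const.mul (Real.continuous_exp.comp
        (continuous_const.mul continuous_id))).continuousOn
    · exact Real.continuous_exp.comp_continuousOn
        ((continuousOn_const.sub (hFcont T hT)).add continuousOn_const)
  have hIint : ∀ T p q : ℝ, 0 ≤ p → p ≤ q → q ≤ T → 0 ≤ T →
      IntervalIntegrable (fun s => M * Real.exp (κ*s) * Real.exp (F T - F s + Cε))
        volume p q := by
    intro T p q hp hpq hq hT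
    apply ContinuousOn.intervalIntegrable
    apply (hIcont T hT).mono
    rw [uIcc_of_le hpq]
    exact Icc_subset_Icc hp hq
  have hFadd : ∀ p q : ℝ, 0 ≤ p → p ≤ q → F p + ∫ s in p..q, g s = F q :=
    fun p q hp hpq => gr_int_add g hgint le_rfl hp hpq
  have hu0 : 0 ≤ y 0 := hypos 0 le_rfl
  have hMe0 : Continuous fun s : ℝ => M * Real.exp (κ*s) :=
    continuous_const.mul (Real.continuous_exp.comp (continuous_const.mul continuous_id))
  have main : ∀ n : ℕ, ∀ t : ℝ, (n:ℝ) ≤ t → t ≤ (n:ℝ)+1 →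
      y t * Real.exp (κ*t) ≤ y 0 * Real.exp (F t)
        + ∫ s in (0:ℝ)..t, M * Real.exp (κ*s) * Real.exp (F t - F s + Cε) := by
    intro n
    induction n with
    | zero =>
      intro t h0t ht1
      push_cast at h0t ht1
      have hA := gr_A κ M hM g y y' hg hgint hy hypos hineq le_rfl h0t
      simp only [mul_zero, Real.exp_zero, mul_one] at hA
      have hEt : (0:ℝ) ≤ Real.exp (F t) := Real.exp_nonneg _
      have step : (∫ s in (0:ℝ)..t, M * Real.exp (κ*s)) * Real.exp (F t)
          ≤ ∫ s in (0:ℝ)..t, M * Real.exp (κ*s) * Real.exp (F t - F s + Cε) := by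
        rw [← intervalIntegral.integral_mul_const]
        apply intervalIntegral.integral_mono_on h0t
        · exact (hMe0.intervalIntegrable 0 t).mul_const _
        · exact hIint t 0 t le_rfl h0t le_rfl h0t
        · intro x hx
          have hFx : F x ≤ Cε := by
            exact gr_int_unit g hg hgint hgbound (a := 0) (b := x) le_rfl hx.1
              (by linarith [hx.2])
          have : Real.exp (F t) ≤ Real.exp (F t - F x + Cε) :=
            Real.exp_le_exp.2 (by linarith)
          have hMe : (0:ℝ) ≤ M * Real.exp (κ*x) := by positivity
          nlinarith
      calc y t * Real.exp (κ*t)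
          ≤ (y 0 + ∫ s in (0:ℝ)..t, M * Real.exp (κ*s)) * Real.exp (∫ s in (0:ℝ)..t, g s) := hA
        _ = y 0 * Real.exp (F t) + (∫ s in (0:ℝ)..t, M * Real.exp (κ*s)) * Real.exp (F t) := by
            rw [hF]; ring
        _ ≤ y 0 * Real.exp (F t)
            + ∫ s in (0:ℝ)..t, M * Real.exp (κ*s) * Real.exp (F t - F s + Cε) := by linarith
    | succ n ih =>
      intro t hnt ht1
      push_cast at hnt ht1
      set m : ℝ := (n:ℝ) + 1 with hm
      have hm0 : 0 ≤ m := by positivity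
      have hmt : m ≤ t := hnt
      have ht0 : 0 ≤ t := le_trans hm0 hmt
      have hihm := ih m (by rw [hm]; linarith) (by rw [hm])
      have hA := gr_A κ M hM g y y' hg hgint hy hypos hineq hm0 hmt
      set E : ℝ := Real.exp (∫ s in m..t, g s) with hE
      have hE0 : 0 ≤ E := Real.exp_nonneg _
      have hFmt : F m + ∫ s in m..t, g s = F t := hFadd m t hm0 hmt
      have hEe : Real.exp (F m) * E = Real.exp (F t) := by
        rw [hE, ← Real.exp_add, hFmt]
      -- multiply ih by E
      have h1 : y m * Real.exp (κ*m) * E ≤ (y 0 * Real.exp (F m)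
          + ∫ s in (0:ℝ)..m, M * Real.exp (κ*s) * Real.exp (F m - F s + Cε)) * E :=
        mul_le_mul_of_nonneg_right hihm hE0
      -- second piece
      have h2 : (∫ s in (0:ℝ)..m, M * Real.exp (κ*s) * Real.exp (F m - F s + Cε)) * E
          = ∫ s in (0:ℝ)..m, M * Real.exp (κ*s) * Real.exp (F t - F s + Cε) := by
        rw [← intervalIntegral.integral_mul_const]
        apply intervalIntegral.integral_congr
        intro x _
        simp only [hE]
        rw [mul_assoc, ← Real.exp_add]
        congr 2
        linarith [hFmt]
      -- third piece
      have h3 : (∫ s in m..t, M * Real.exp (κ*s)) * E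
          ≤ ∫ s in m..t, M * Real.exp (κ*s) * Real.exp (F t - F s + Cε) := by
        rw [← intervalIntegral.integral_mul_const]
        apply intervalIntegral.integral_mono_on hmt
        · exact (hMe0.intervalIntegrable m t).mul_const _
        · exact hIint t m t hm0 hmt le_rfl ht0
        · intro x hx
          have hxm : (∫ s in m..x, g s) ≤ Cε := by
            apply gr_int_unit g hg hgint hgbound hm0 hx.1
            linarith [hx.2]
          have hFxm : F m + ∫ s in m..x, g s = F x := hFadd m x hm0 hx.1
          have hle : Real.exp (∫ s in m..t, g s) ≤ Real.exp (F t - F x + Cε) := by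
            apply Real.exp_le_exp.2
            linarith [hFmt]
          have hMe : (0:ℝ) ≤ M * Real.exp (κ*x) := by positivity
          simp only [hE]
          nlinarith
      -- combine
      have hsum : (∫ s in (0:ℝ)..m, M * Real.exp (κ*s) * Real.exp (F t - F s + Cε))
          + ∫ s in m..t, M * Real.exp (κ*s) * Real.exp (F t - F s + Cε)
          = ∫ s in (0:ℝ)..t, M * Real.exp (κ*s) * Real.exp (F t - F s + Cε) :=
        intervalIntegral.integral_add_adjacent_intervals
          (hIint t 0 m le_rfl hm0 hmt ht0) (hIint t m t hm0 hmt le_rfl ht0)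
      calc y t * Real.exp (κ*t)
          ≤ (y m * Real.exp (κ*m) + ∫ s in m..t, M * Real.exp (κ*s)) * E := hA
        _ = y m * Real.exp (κ*m) * E + (∫ s in m..t, M * Real.exp (κ*s)) * E := by ring
        _ ≤ (y 0 * Real.exp (F m)
              + ∫ s in (0:ℝ)..m, M * Real.exp (κ*s) * Real.exp (F m - F s + Cε)) * E
            + (∫ s in m..t, M * Real.exp (κ*s)) * E := by linarith
        _ = y 0 * (Real.exp (F m) * E)
            + (∫ s in (0:ℝ)..m, M * Real.exp (κ*s) * Real.exp (F m - F s + Cε)) * E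
            + (∫ s in m..t, M * Real.exp (κ*s)) * E := by ring
        _ ≤ y 0 * Real.exp (F t)
            + (∫ s in (0:ℝ)..m, M * Real.exp (κ*s) * Real.exp (F t - F s + Cε))
            + ∫ s in m..t, M * Real.exp (κ*s) * Real.exp (F t - F s + Cε) := by
            rw [hEe, h2]; linarith
        _ = y 0 * Real.exp (F t)
            + ∫ s in (0:ℝ)..t, M * Real.exp (κ*s) * Real.exp (F t - F s + Cε) := by
            rw [add_assoc, hsum]
  intro t ht
  have h1 : (⌊t⌋₊ : ℝ) ≤ t := Nat.floor_le ht
  have h2 : t ≤ (⌊t⌋₊ : ℝ) + 1 := (Nat.lt_floor_add_one t).le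
  exact main ⌊t⌋₊ t h1 h2

set_option maxHeartbeats 2000000 in
theorem gronwall_perturbed_damping (κ M Cε : ℝ) (hκ : 0 < κ) (hM : 0 ≤ M)
    (hCε : 0 ≤ Cε) (hsmall : Cε < κ/2)
    (g : ℝ → ℝ) (hg : ∀ t ≥ (0:ℝ), 0 ≤ g t)
    (hgint : ∀ t ≥ (0:ℝ), IntervalIntegrable g volume t (t+1))
    (hgbound : ∀ t ≥ (0:ℝ), (∫ s in t..(t+1), g s) ≤ Cε)
    (y y' : ℝ → ℝ) (hy : ∀ t ≥ (0:ℝ), HasDerivAt y (y' t) t)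
    (hypos : ∀ t ≥ (0:ℝ), 0 ≤ y t)
    (hineq : ∀ᵐ t ∂(volume.restrict (Set.Ici (0:ℝ))), y' t + (κ - g t) * y t ≤ M) :
    (∀ t ≥ (0:ℝ), y t ≤ Real.exp Cε * (y 0 * Real.exp (-(κ - Cε)*t)
        + M * Real.exp Cε * ∫ s in (0:ℝ)..t, Real.exp (-(κ - Cε)*(t - s))))
    ∧ ∃ C' > (0:ℝ), ∀ t ≥ (0:ℝ), y t ≤ C' * (y 0 * Real.exp (-κ*t/2) + M) := by
  have hgInt := gr_intInt g hgint
  set F : ℝ → ℝ := fun s => ∫ r in (0:ℝ)..s, g r with hF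
  have hu0 : 0 ≤ y 0 := hypos 0 le_rfl
  set lam : ℝ := κ - Cε with hlam
  have hlam0 : 0 < lam := by rw [hlam]; linarith
  -- first conclusion
  have first : ∀ t ≥ (0:ℝ), y t ≤ Real.exp Cε * (y 0 * Real.exp (-(κ - Cε)*t)
      + M * Real.exp Cε * ∫ s in (0:ℝ)..t, Real.exp (-(κ - Cε)*(t - s))) := by
    intro t ht
    have key := gr_T κ M Cε hM g y y' hg hgint hgbound hy hypos hineq t ht
    have hFt : F t ≤ Cε * t + Cε := by simpa using gr_int_lin g hg hgint hCε hgbound le_rfl ht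
    have hexp_pos : (0:ℝ) < Real.exp (κ*t) := Real.exp_pos _
    rw [← mul_le_mul_iff_of_pos_right hexp_pos]
    -- bound the two parts
    have h1 : y 0 * Real.exp (F t) ≤ y 0 * Real.exp (Cε*t + Cε) :=
      mul_le_mul_of_nonneg_left (Real.exp_le_exp.2 (by linarith)) hu0
    set J : ℝ := ∫ s in (0:ℝ)..t, Real.exp (-(κ - Cε)*(t - s)) with hJ
    have hcontE : Continuous fun s : ℝ => Real.exp (-(κ - Cε)*(t - s)) :=
      Real.continuous_exp.comp (continuous_const.mul (continuous_const.sub continuous_id))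
    have hJint : IntervalIntegrable (fun s => Real.exp (-(κ - Cε)*(t - s))) volume 0 t :=
      hcontE.intervalIntegrable 0 t
    have h2 : (∫ s in (0:ℝ)..t, M * Real.exp (κ*s) * Real.exp (F t - F s + Cε))
        ≤ ∫ s in (0:ℝ)..t,
            (M * Real.exp (2*Cε)) * (Real.exp (-(κ - Cε)*(t - s)) * Real.exp (κ*t)) := by
      apply intervalIntegral.integral_mono_on ht
      · have hFcont : ContinuousOn F (Icc 0 t) := gr_Gcont g hgInt le_rfl ht
        apply ContinuousOn.intervalIntegrable
        rw [uIcc_of_le ht]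
        apply ContinuousOn.mul
        · exact (continuous_const.mul (Real.continuous_exp.comp
            (continuous_const.mul continuous_id))).continuousOn
        · exact Real.continuous_exp.comp_continuousOn
            ((continuousOn_const.sub hFcont).add continuousOn_const)
      · exact (continuous_const.mul (hcontE.mul continuous_const)).intervalIntegrable 0 t
      · intro x hx
        have hFsx : F x + ∫ s in x..t, g s = F t := gr_int_add g hgint le_rfl hx.1 hx.2
        have hlin : (∫ s in x..t, g s) ≤ Cε * (t - x) + Cε :=
          gr_int_lin g hg hgint hCε hgbound hx.1 hx.2
        rw [mul_assoc, ← Real.exp_add, mul_assoc, ← Real.exp_add, ← Real.exp_add]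
        have hM2 : (0:ℝ) ≤ M := hM
        apply mul_le_mul_of_nonneg_left _ hM2
        apply Real.exp_le_exp.2
        nlinarith
    have h2' : (∫ s in (0:ℝ)..t,
          (M * Real.exp (2*Cε)) * (Real.exp (-(κ - Cε)*(t - s)) * Real.exp (κ*t)))
        = M * Real.exp (2*Cε) * J * Real.exp (κ*t) := by
      rw [intervalIntegral.integral_const_mul]
      rw [show (fun s => Real.exp (-(κ - Cε)*(t - s)) * Real.exp (κ*t))
            = fun s => (Real.exp (-(κ - Cε)*(t - s))) * Real.exp (κ*t) from rfl]
      rw [intervalIntegral.integral_mul_const]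
      rw [hJ]; ring
    have hgoal_eq : (Real.exp Cε * (y 0 * Real.exp (-(κ - Cε)*t)
          + M * Real.exp Cε * J)) * Real.exp (κ*t)
        = y 0 * Real.exp (Cε*t + Cε) + M * Real.exp (2*Cε) * J * Real.exp (κ*t) := by
      have e1 : Real.exp Cε * Real.exp (-(κ - Cε)*t) * Real.exp (κ*t)
          = Real.exp (Cε*t + Cε) := by
        rw [← Real.exp_add, ← Real.exp_add]; congr 1; ring
      have e2 : Real.exp Cε * Real.exp Cε = Real.exp (2*Cε) := by
        rw [← Real.exp_add]; congr 1; ring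
      linear_combination y 0 * e1 + M * J * Real.exp (κ*t) * e2
    rw [hgoal_eq]
    calc y t * Real.exp (κ*t)
        ≤ y 0 * Real.exp (F t)
          + ∫ s in (0:ℝ)..t, M * Real.exp (κ*s) * Real.exp (F t - F s + Cε) := key
      _ ≤ y 0 * Real.exp (Cε*t + Cε) + M * Real.exp (2*Cε) * J * Real.exp (κ*t) := by
          have := le_trans h2 (le_of_eq h2')
          linarith
  refine ⟨first, ?_⟩
  refine ⟨Real.exp (2*Cε) * (1 + 2/κ), by positivity, ?_⟩
  intro t ht
  have hfirst := first t ht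
  set J : ℝ := ∫ s in (0:ℝ)..t, Real.exp (-(κ - Cε)*(t - s)) with hJ
  -- compute J
  have hJval : J = (1 - Real.exp (-lam * t)) / lam := by
    have hderiv : ∀ x ∈ uIcc (0:ℝ) t,
        HasDerivAt (fun s => Real.exp (-lam*(t - s)) / lam) (Real.exp (-(κ - Cε)*(t - x))) x := by
      intro x _
      have hinner : HasDerivAt (fun s : ℝ => -lam*(t - s)) lam x := by
        have : HasDerivAt (fun s : ℝ => -lam*t + lam*s) lam x := by
          have h0 := (hasDerivAt_const x (-lam*t)).add ((hasDerivAt_id x).const_mul lam)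
          simp only [zero_add, mul_one] at h0; exact h0
        convert this using 1
        funext s; ring
      have := (hinner.exp).div_const lam
      refine this.congr_deriv ?_
      rw [mul_div_assoc, div_self hlam0.ne', mul_one]
    have hcont : IntervalIntegrable (fun s => Real.exp (-(κ - Cε)*(t - s))) volume 0 t :=
      (Real.continuous_exp.comp (continuous_const.mul
        (continuous_const.sub continuous_id))).intervalIntegrable 0 t
    have := intervalIntegral.integral_eq_sub_of_hasDerivAt hderiv hcont
    rw [hJ, this]
    have : t - t = 0 := by ring
    rw [this]
    simp [Real.exp_zero]
    ring
  have hJle : J ≤ 2/κ := by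
    rw [hJval]
    have h1 : (1 - Real.exp (-lam * t)) / lam ≤ 1 / lam := by
      apply (div_le_div_iff_of_pos_right hlam0).2
      have := Real.exp_pos (-lam * t)
      linarith
    have h2 : 1 / lam ≤ 2 / κ := by
      rw [div_le_div_iff₀ hlam0 hκ, hlam]
      linarith
    linarith
  have hJ0 : 0 ≤ J := by
    rw [hJval]
    apply div_nonneg _ hlam0.le
    have hle : -lam * t ≤ 0 := by nlinarith
    have : Real.exp (-lam * t) ≤ Real.exp 0 := Real.exp_le_exp.2 hle
    rw [Real.exp_zero] at this
    linarith
  have hex : Real.exp (-(κ - Cε)*t) ≤ Real.exp (-κ*t/2) := by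
    apply Real.exp_le_exp.2
    nlinarith
  have hA : Real.exp Cε ≤ Real.exp (2*Cε) := Real.exp_le_exp.2 (by linarith)
  have hA2 : Real.exp Cε * Real.exp Cε = Real.exp (2*Cε) := by
    rw [← Real.exp_add]; congr 1; ring
  have hApos : (0:ℝ) < Real.exp Cε := Real.exp_pos _
  have hA2pos : (0:ℝ) < Real.exp (2*Cε) := Real.exp_pos _
  have he1 : (0:ℝ) ≤ Real.exp (-(κ - Cε)*t) := Real.exp_nonneg _
  have he2 : (0:ℝ) ≤ Real.exp (-κ*t/2) := Real.exp_nonneg _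
  have hstep1 : Real.exp Cε * (y 0 * Real.exp (-(κ - Cε)*t))
      ≤ Real.exp (2*Cε) * (y 0 * Real.exp (-κ*t/2)) :=
    mul_le_mul hA (mul_le_mul_of_nonneg_left hex hu0)
      (mul_nonneg hu0 he1) hA2pos.le
  have hstep2 : Real.exp (2*Cε) * M * J ≤ Real.exp (2*Cε) * M * (2/κ) :=
    mul_le_mul_of_nonneg_left hJle (mul_nonneg hA2pos.le hM)
  have hstep3 : Real.exp (2*Cε) * (y 0 * Real.exp (-κ*t/2)) + Real.exp (2*Cε) * M * (2/κ)
      ≤ Real.exp (2*Cε) * (1 + 2/κ) * (y 0 * Real.exp (-κ*t/2) + M) := by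
    have hk2 : (0:ℝ) ≤ 2/κ := by positivity
    have q1 : 0 ≤ Real.exp (2*Cε) * (y 0 * Real.exp (-κ*t/2)) * (2/κ) :=
      mul_nonneg (mul_nonneg hA2pos.le (mul_nonneg hu0 he2)) hk2
    have q2 : 0 ≤ Real.exp (2*Cε) * M := mul_nonneg hA2pos.le hM
    nlinarith
  have hexpand : Real.exp Cε * (y 0 * Real.exp (-(κ - Cε)*t) + M * Real.exp Cε * J)
      = Real.exp Cε * (y 0 * Real.exp (-(κ - Cε)*t)) + Real.exp (2*Cε) * M * J := by
    linear_combination M * J * hA2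
  calc y t ≤ Real.exp Cε * (y 0 * Real.exp (-(κ - Cε)*t) + M * Real.exp Cε * J) := hfirst
    _ = Real.exp Cε * (y 0 * Real.exp (-(κ - Cε)*t)) + Real.exp (2*Cε) * M * J := hexpand
    _ ≤ Real.exp (2*Cε) * (y 0 * Real.exp (-κ*t/2)) + Real.exp (2*Cε) * M * (2/κ) := by
        linarith
    _ ≤ Real.exp (2*Cε) * (1 + 2/κ) * (y 0 * Real.exp (-κ*t/2) + M) := hstep3
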